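/- Soundness and completeness of Outcome Logic with variable assignment: in the Outcome Logic instance whose only atomic actions are assignments x := E, for every program C and all outcome assertions φ, ψ ⊆ W(S), the triple ⟨φ⟩C⟨ψ⟩ is derivable (⊢ ⟨φ⟩C⟨ψ⟩, with no oracle axioms for atomic actions) if and only if it is semantically valid (⊨ ⟨φ⟩C⟨ψ⟩). -/

import Mathlib

open scoped Classical

universe u v

/-- A semiring that is simultaneously a complete lattice with bottom `0`, whose order
coincides with the natural (additive) order, and in which addition and multiplication
are Scott-continuous. -/
class OLSemiring (U : Type u) extends Semiring U, CompleteLattice U where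
  bot_eq_zero : (⊥ : U) = 0
  le_iff_exists_add : ∀ a b : U, a ≤ b ↔ ∃ c, a + c = b
  add_scott : ∀ (D : Set U), D.Nonempty → DirectedOn (· ≤ ·) D → ∀ y : U,
    sSup ((fun x => x + y) '' D) = sSup D + y
  mul_scott_right : ∀ (D : Set U), D.Nonempty → DirectedOn (· ≤ ·) D → ∀ y : U,
    sSup ((fun x => x * y) '' D) = sSup D * y
  mul_scott_left : ∀ (D : Set U), D.Nonempty → DirectedOn (· ≤ ·) D → ∀ y : U,
    sSup ((fun x => y * x) '' D) = y * sSup D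

variable {U : Type u} [OLSemiring U]

/-- Infinite sum: supremum over finite subfamilies of finite sums. -/
noncomputable def wsum {I : Type v} (f : I → U) : U :=
  ⨆ J : Finset I, ∑ i ∈ J, f i

/-- The unit of the weighting monad. -/
noncomputable def eta {X : Type u} (x : X) : X → U :=
  fun y => if y = x then 1 else 0

/-- Kleisli extension: `kext f m y = ∑_{x ∈ supp m} m x * f x y`. -/
noncomputable def kext {X Y : Type u} (f : X → Y → U) (m : X → U) : Y → U :=
  fun y => wsum (fun x : Function.support m => m x.1 * f x.1 y)

/-- Syntax of tests over primitive tests indexed by `TI`. -/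
inductive TestExpr (TI : Type u) : Type u where
  | prim (t : TI)
  | tt
  | ff
  | and (b₁ b₂ : TestExpr TI)
  | or (b₁ b₂ : TestExpr TI)
  | not (b : TestExpr TI)

/-- The set of states at which a test is true. -/
def testSet {St TI : Type u} (tsem : TI → Set St) : TestExpr TI → Set St
  | .prim t => tsem t
  | .tt => Set.univ
  | .ff => ∅
  | .and b₁ b₂ => testSet tsem b₁ ∩ testSet tsem b₂
  | .or b₁ b₂ => testSet tsem b₁ ∪ testSet tsem b₂
  | .not b => (testSet tsem b)ᶜ

/-- Expressions: a test or a weight. -/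
inductive Expr (U : Type u) (TI : Type u) : Type u where
  | test (b : TestExpr TI)
  | wt (u : U)

/-- Evaluation of expressions into weights. -/
noncomputable def eeval {St TI : Type u} (tsem : TI → Set St) : Expr U TI → St → U
  | .test b => fun σ => if σ ∈ testSet tsem b then 1 else 0
  | .wt u => fun _ => u

/-- Programs. -/
inductive Prog (U St TI Act : Type u) : Type u where
  | skip
  | seq (C₁ C₂ : Prog U St TI Act)
  | choice (C₁ C₂ : Prog U St TI Act)
  | assume (e : Expr U TI)
  | iter (C : Prog U St TI Act) (e e' : Expr U TI)
  | act (a : Act)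

/-- The characteristic function of iteration. -/
noncomputable def Phi {St : Type u} (w w' : St → U) (g : St → St → U)
    (f : St → St → U) : St → St → U :=
  fun σ τ => w σ * kext f (g σ) τ + w' σ * eta σ τ

/-- Denotational semantics of programs. -/
noncomputable def sem {St TI Act : Type u} (tsem : TI → Set St)
    (asem : Act → St → St → U) : Prog U St TI Act → St → St → U
  | .skip => fun σ => eta σ
  | .seq C₁ C₂ => fun σ => kext (sem tsem asem C₂) (sem tsem asem C₁ σ)
  | .choice C₁ C₂ => fun σ τ => sem tsem asem C₁ σ τ + sem tsem asem C₂ σ τ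
  | .assume e => fun σ τ => eeval tsem e σ * eta σ τ
  | .iter C e e' =>
      ⨆ n : ℕ, (Phi (eeval tsem e) (eeval tsem e') (sem tsem asem C))^[n] (fun _ _ => 0)
  | .act a => asem a

/-- Outcome assertions. -/
abbrev OA (U : Type u) (St : Type u) := Set (St → U)

/-- Binary outcome conjunction. -/
def oplus {St : Type u} (φ ψ : OA U St) : OA U St :=
  { m | ∃ m₁ ∈ φ, ∃ m₂ ∈ ψ, m = fun σ => m₁ σ + m₂ σ }

/-- Indexed outcome conjunction. -/
noncomputable def bigOplus {St T : Type u} (φ : T → OA U St) : OA U St :=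
  { m | ∃ f : T → St → U, (∀ t, f t ∈ φ t) ∧ m = fun σ => wsum (fun t => f t σ) }

/-- Right scaling of an assertion by a weight. -/
def odotR {St : Type u} (φ : OA U St) (u : U) : OA U St :=
  { m' | ∃ m ∈ φ, m' = fun σ => m σ * u }

/-- Left scaling of an assertion by a weight. -/
def odotL {St : Type u} (u : U) (φ : OA U St) : OA U St :=
  { m' | ∃ m ∈ φ, m' = fun σ => u * m σ }

/-- `φ ⊨ e = u` : the expression `e` evaluates to `u` on the support of every `m ∈ φ`. -/
def entailsEq {St TI : Type u} (tsem : TI → Set St) (φ : OA U St)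
    (e : Expr U TI) (u : U) : Prop :=
  ∀ m ∈ φ, ∀ σ, m σ ≠ 0 → eeval tsem e σ = u

/-- Semantic validity of an outcome triple. -/
def valid {St TI Act : Type u} (tsem : TI → Set St) (asem : Act → St → St → U)
    (φ : OA U St) (C : Prog U St TI Act) (ψ : OA U St) : Prop :=
  ∀ m ∈ φ, kext (sem tsem asem C) m ∈ ψ

/-- The family `ψ` of assertions converges to `ψlim`. -/
def convergesTo {St : Type u} (ψ : ℕ → OA U St) (ψlim : OA U St) : Prop :=
  ∀ ms : ℕ → St → U, (∀ n, ms n ∈ ψ n) → (fun σ => wsum (fun n => ms n σ)) ∈ ψlim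

/-- The Outcome Logic proof system (with oracle axioms for valid atomic triples). -/
inductive Deriv {St TI Act : Type u} (tsem : TI → Set St) (asem : Act → St → St → U) :
    OA U St → Prog U St TI Act → OA U St → Prop where
  | atom {φ ψ} (a : Act) :
      valid tsem asem φ (.act a) ψ → Deriv tsem asem φ (.act a) ψ
  | skip (φ) : Deriv tsem asem φ .skip φ
  | seq {φ ϑ ψ C₁ C₂} :
      Deriv tsem asem φ C₁ ϑ → Deriv tsem asem ϑ C₂ ψ →
      Deriv tsem asem φ (.seq C₁ C₂) ψ
  | plus {φ ψ₁ ψ₂ C₁ C₂} :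
      Deriv tsem asem φ C₁ ψ₁ → Deriv tsem asem φ C₂ ψ₂ →
      Deriv tsem asem φ (.choice C₁ C₂) (oplus ψ₁ ψ₂)
  | assume {φ e u} :
      entailsEq tsem φ e u → Deriv tsem asem φ (.assume e) (odotR φ u)
  | iter {C e e'} (φn ψn : ℕ → OA U St) (ψlim : OA U St) :
      convergesTo ψn ψlim →
      (∀ n, Deriv tsem asem (φn n) (.seq (.assume e) C) (φn (n + 1))) →
      (∀ n, Deriv tsem asem (φn n) (.assume e') (ψn n)) →
      Deriv tsem asem (φn 0) (.iter C e e') ψlim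
  | false (C φ) : Deriv tsem asem ∅ C φ
  | true (C φ) : Deriv tsem asem φ C Set.univ
  | scale {φ ψ C} (u : U) :
      Deriv tsem asem φ C ψ → Deriv tsem asem (odotL u φ) C (odotL u ψ)
  | disj {φ₁ φ₂ ψ₁ ψ₂ C} :
      Deriv tsem asem φ₁ C ψ₁ → Deriv tsem asem φ₂ C ψ₂ →
      Deriv tsem asem (φ₁ ∪ φ₂) C (ψ₁ ∪ ψ₂)
  | conj {φ₁ φ₂ ψ₁ ψ₂ C} :
      Deriv tsem asem φ₁ C ψ₁ → Deriv tsem asem φ₂ C ψ₂ →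
      Deriv tsem asem (φ₁ ∩ φ₂) C (ψ₁ ∩ ψ₂)
  | choice {T : Type u} {C} (φ φ' : T → OA U St) :
      (∀ t, Deriv tsem asem (φ t) C (φ' t)) →
      Deriv tsem asem (bigOplus φ) C (bigOplus φ')
  | exists_ {T : Type u} {C} (φ φ' : T → OA U St) :
      (∀ t, Deriv tsem asem (φ t) C (φ' t)) →
      Deriv tsem asem (⋃ t, φ t) C (⋃ t, φ' t)
  | conseq {φ φ' ψ ψ' C} :
      φ' ⊆ φ → Deriv tsem asem φ C ψ → ψ ⊆ ψ' →
      Deriv tsem asem φ' C ψ'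

/-! ## The instance with variables and state -/

/-- Program stores: maps from variables to integers. -/
abbrev Store (Var : Type) := Var → ℤ

/-- Arithmetic expressions over variables `Var` (tests evaluate to 0 or 1). -/
inductive AExpr (Var : Type) : Type where
  | var (x : Var)
  | const (v : ℤ)
  | test (b : TestExpr (Set (Store Var)))
  | add (E₁ E₂ : AExpr Var)
  | sub (E₁ E₂ : AExpr Var)
  | mul (E₁ E₂ : AExpr Var)

/-- Evaluation of arithmetic expressions. -/
noncomputable def aeval {Var : Type} : AExpr Var → Store Var → ℤ
  | .var x, s => s x
  | .const v, _ => v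
  | .test b, s => if s ∈ testSet id b then 1 else 0
  | .add E₁ E₂, s => aeval E₁ s + aeval E₂ s
  | .sub E₁ E₂, s => aeval E₁ s - aeval E₂ s
  | .mul E₁ E₂, s => aeval E₁ s * aeval E₂ s

/-- Semantics of the assignment action `x := E` : `⟦x:=E⟧(s) = η(s[x↦⟦E⟧(s)])`. -/
noncomputable def asemAssign (U : Type) [OLSemiring U] {Var : Type} :
    Var × AExpr Var → Store Var → Store Var → U :=
  fun a s => eta (Function.update s a.1 (aeval a.2 s))

/-- Programs of the instance with state: primitive tests are all subsets of stores and
atomic actions are assignments. -/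
abbrev ProgS (U Var : Type) := Prog U (Store Var) (Set (Store Var)) (Var × AExpr Var)

/-- Substitution on outcome assertions:
`φ[E/x] = {m | (λs. η(s[x↦⟦E⟧(s)]))†(m) ∈ φ}`. -/
def substOA {U : Type} [OLSemiring U] {Var : Type} (x : Var) (E : AExpr Var)
    (φ : OA U (Store Var)) : OA U (Store Var) :=
  { m | kext (fun s => eta (Function.update s x (aeval E s))) m ∈ φ }

/-- `◻P = {m | supp(m) ⊆ P}`. -/
def boxOA {U : Type} [OLSemiring U] {Var : Type} (P : Set (Store Var)) :
    OA U (Store Var) :=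
  { m | Function.support m ⊆ P }

/-- The free variables of an assertion on stores. -/
def freeVars {Var : Type} (P : Set (Store Var)) : Set Var :=
  { x | ∃ s ∈ P, ∃ v : ℤ, Function.update s x v ∉ P }

/-- The variables modified by a program. -/
def modVars {U Var : Type} : ProgS U Var → Set Var
  | .skip => ∅
  | .seq C₁ C₂ => modVars C₁ ∪ modVars C₂
  | .choice C₁ C₂ => modVars C₁ ∪ modVars C₂
  | .assume _ => ∅
  | .iter C _ _ => modVars C
  | .act a => {a.1}

/-- The Outcome Logic proof system for the instance with variable assignment (no oracle
axioms for atomic actions; instead the rules `Assign` and `Constancy`). -/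
inductive DerivA {U : Type} [OLSemiring U] {Var : Type} :
    OA U (Store Var) → ProgS U Var → OA U (Store Var) → Prop where
  | skip (φ) : DerivA φ .skip φ
  | seq {φ ϑ ψ C₁ C₂} :
      DerivA φ C₁ ϑ → DerivA ϑ C₂ ψ → DerivA φ (.seq C₁ C₂) ψ
  | plus {φ ψ₁ ψ₂ C₁ C₂} :
      DerivA φ C₁ ψ₁ → DerivA φ C₂ ψ₂ →
      DerivA φ (.choice C₁ C₂) (oplus ψ₁ ψ₂)
  | assume {φ e u} :
      entailsEq id φ e u → DerivA φ (.assume e) (odotR φ u)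
  | iter {C e e'} (φn ψn : ℕ → OA U (Store Var)) (ψlim : OA U (Store Var)) :
      convergesTo ψn ψlim →
      (∀ n, DerivA (φn n) (.seq (.assume e) C) (φn (n + 1))) →
      (∀ n, DerivA (φn n) (.assume e') (ψn n)) →
      DerivA (φn 0) (.iter C e e') ψlim
  | false (C φ) : DerivA ∅ C φ
  | true (C φ) : DerivA φ C Set.univ
  | scale {φ ψ C} (u : U) :
      DerivA φ C ψ → DerivA (odotL u φ) C (odotL u ψ)
  | disj {φ₁ φ₂ ψ₁ ψ₂ C} :
      DerivA φ₁ C ψ₁ → DerivA φ₂ C ψ₂ →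
      DerivA (φ₁ ∪ φ₂) C (ψ₁ ∪ ψ₂)
  | conj {φ₁ φ₂ ψ₁ ψ₂ C} :
      DerivA φ₁ C ψ₁ → DerivA φ₂ C ψ₂ →
      DerivA (φ₁ ∩ φ₂) C (ψ₁ ∩ ψ₂)
  | choice {T : Type} {C} (φ φ' : T → OA U (Store Var)) :
      (∀ t, DerivA (φ t) C (φ' t)) →
      DerivA (bigOplus φ) C (bigOplus φ')
  | exists_ {T : Type} {C} (φ φ' : T → OA U (Store Var)) :
      (∀ t, DerivA (φ t) C (φ' t)) →
      DerivA (⋃ t, φ t) C (⋃ t, φ' t)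
  | conseq {φ φ' ψ ψ' C} :
      φ' ⊆ φ → DerivA φ C ψ → ψ ⊆ ψ' → DerivA φ' C ψ'
  | assign (x : Var) (E : AExpr Var) (φ) :
      DerivA (substOA x E φ) (.act (x, E)) φ
  | constancy {φ ψ C} (P : Set (Store Var)) :
      DerivA φ C ψ → freeVars P ∩ modVars C = ∅ →
      DerivA (φ ∩ boxOA P) C (ψ ∩ boxOA P)

/-! ### Auxiliary order-theoretic facts -/

section Aux

instance (priority := 100) OLSemiring.toIsOrderedAddMonoid :
    IsOrderedAddMonoid U where
  add_le_add_left a b h c := by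
    obtain ⟨d, rfl⟩ := (OLSemiring.le_iff_exists_add a b).1 h
    exact (OLSemiring.le_iff_exists_add _ _).2 ⟨d, add_right_comm _ _ _⟩

instance (priority := 100) OLSemiring.toCanonicallyOrderedAdd :
    CanonicallyOrderedAdd U where
  exists_add_of_le h :=
    ⟨_, (((OLSemiring.le_iff_exists_add _ _).1 h).choose_spec).symm⟩
  le_self_add a b := (OLSemiring.le_iff_exists_add a (a + b)).2 ⟨b, rfl⟩
  le_add_self a b := (OLSemiring.le_iff_exists_add a (b + a)).2 ⟨b, add_comm _ _⟩

instance : CovariantClass U U (· * ·) (· ≤ ·) :=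
  ⟨fun c a b h => by
    obtain ⟨d, rfl⟩ := exists_add_of_le h
    rw [mul_add]; exact le_self_add⟩

instance : CovariantClass U U (Function.swap (· * ·)) (· ≤ ·) :=
  ⟨fun c a b h => by
    obtain ⟨d, rfl⟩ := exists_add_of_le h
    show a * c ≤ (a + d) * c
    rw [add_mul]; exact le_self_add⟩

end Aux

/-! ### wsum calculus -/

section Wsum

variable {I : Type v}

theorem wsum_eq_sSup (f : I → U) :
    wsum f = sSup (Set.range fun K : Finset I => ∑ i ∈ K, f i) := rfl

theorem sum_le_wsum (f : I → U) (K : Finset I) : ∑ i ∈ K, f i ≤ wsum f :=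
  le_iSup (fun K : Finset I => ∑ i ∈ K, f i) K

theorem wsum_le {f : I → U} {z : U} (h : ∀ K : Finset I, ∑ i ∈ K, f i ≤ z) :
    wsum f ≤ z := iSup_le h

theorem le_wsum (f : I → U) (i : I) : f i ≤ wsum f := by
  simpa using sum_le_wsum f {i}

theorem wsum_mono {f g : I → U} (h : ∀ i, f i ≤ g i) : wsum f ≤ wsum g :=
  wsum_le fun K => (Finset.sum_le_sum fun i _ => h i).trans (sum_le_wsum g K)

theorem wsum_congr {f g : I → U} (h : ∀ i, f i = g i) : wsum f = wsum g :=
  congrArg wsum (funext h)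

theorem wsum_eq_zero {f : I → U} (h : ∀ i, f i = 0) : wsum f = 0 :=
  le_antisymm (wsum_le fun K => le_of_eq (Finset.sum_eq_zero fun i _ => h i))
    zero_le

theorem wsum_eq_single {f : I → U} (a : I) (h : ∀ i, i ≠ a → f i = 0) :
    wsum f = f a := by
  refine le_antisymm (wsum_le fun K => ?_) (le_wsum f a)
  by_cases ha : a ∈ K
  · exact le_of_eq (Finset.sum_eq_single_of_mem a ha fun b _ hb => h b hb)
  · exact (le_of_eq (Finset.sum_eq_zero fun i hi => h i fun e => ha (e ▸ hi))).trans
      zero_le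

theorem wsum_subtype {p : I → Prop} {f : I → U} (h : ∀ i, ¬ p i → f i = 0) :
    wsum (fun x : Subtype p => f x.1) = wsum f := by
  refine le_antisymm (wsum_le fun K => ?_) (wsum_le fun K => ?_)
  · rw [← Finset.sum_image (g := Subtype.val) (f := f)
      (fun x _ y _ e => Subtype.ext e)]
    exact sum_le_wsum f _
  · calc ∑ i ∈ K, f i = ∑ i ∈ K.filter p, f i :=
          (Finset.sum_filter_of_ne fun i _ hfi => by_contra fun hp => hfi (h i hp)).symm
      _ = ∑ x ∈ K.subtype p, f x.1 := (Finset.sum_subtype_eq_sum_filter f).symm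
      _ ≤ _ := sum_le_wsum _ _

theorem directedOn_range_sum (f : I → U) :
    DirectedOn (· ≤ ·) (Set.range fun K : Finset I => ∑ i ∈ K, f i) := by
  rintro _ ⟨K, rfl⟩ _ ⟨L, rfl⟩
  exact ⟨∑ i ∈ K ∪ L, f i, ⟨K ∪ L, rfl⟩,
    Finset.sum_le_sum_of_subset Finset.subset_union_left,
    Finset.sum_le_sum_of_subset Finset.subset_union_right⟩

theorem range_sum_nonempty (f : I → U) :
    (Set.range fun K : Finset I => ∑ i ∈ K, f i).Nonempty := ⟨_, ∅, rfl⟩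

theorem wsum_mul (f : I → U) (u : U) : wsum f * u = wsum (fun i => f i * u) := by
  have h := OLSemiring.mul_scott_right (Set.range fun K : Finset I => ∑ i ∈ K, f i)
      (range_sum_nonempty f) (directedOn_range_sum f) u
  have h2 : ((fun x => x * u) '' Set.range fun K : Finset I => ∑ i ∈ K, f i)
      = Set.range fun K : Finset I => ∑ i ∈ K, f i * u := by
    rw [← Set.range_comp]
    apply congrArg
    funext K
    show (∑ i ∈ K, f i) * u = ∑ i ∈ K, f i * u
    exact Finset.sum_mul _ _ _
  rw [wsum_eq_sSup, wsum_eq_sSup, ← h, h2]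

theorem mul_wsum (f : I → U) (u : U) : u * wsum f = wsum (fun i => u * f i) := by
  have h := OLSemiring.mul_scott_left (Set.range fun K : Finset I => ∑ i ∈ K, f i)
      (range_sum_nonempty f) (directedOn_range_sum f) u
  have h2 : ((fun x => u * x) '' Set.range fun K : Finset I => ∑ i ∈ K, f i)
      = Set.range fun K : Finset I => ∑ i ∈ K, u * f i := by
    rw [← Set.range_comp]
    apply congrArg
    funext K
    show u * (∑ i ∈ K, f i) = ∑ i ∈ K, u * f i
    exact Finset.mul_sum _ _ _
  rw [wsum_eq_sSup, wsum_eq_sSup, ← h, h2]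

theorem add_wsum_le {f : I → U} {c z : U}
    (h : ∀ K : Finset I, c + ∑ i ∈ K, f i ≤ z) : c + wsum f ≤ z := by
  have hs := OLSemiring.add_scott (Set.range fun K : Finset I => ∑ i ∈ K, f i)
      (range_sum_nonempty f) (directedOn_range_sum f) c
  rw [add_comm, wsum_eq_sSup, ← hs]
  refine sSup_le ?_
  rintro _ ⟨_, ⟨K, rfl⟩, rfl⟩
  show (∑ i ∈ K, f i) + c ≤ z
  rw [add_comm]
  exact h K

theorem wsum_add (f g : I → U) :
    wsum (fun i => f i + g i) = wsum f + wsum g := by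
  refine le_antisymm (wsum_le fun K => ?_) ?_
  · rw [Finset.sum_add_distrib]
    exact add_le_add (sum_le_wsum f K) (sum_le_wsum g K)
  · rw [add_comm]
    refine add_wsum_le fun K => ?_
    rw [add_comm]
    refine add_wsum_le fun L => ?_
    calc ∑ i ∈ K, f i + ∑ i ∈ L, g i
        ≤ ∑ i ∈ K ∪ L, f i + ∑ i ∈ K ∪ L, g i :=
          add_le_add (Finset.sum_le_sum_of_subset Finset.subset_union_left)
            (Finset.sum_le_sum_of_subset Finset.subset_union_right)
      _ = ∑ i ∈ K ∪ L, (f i + g i) := Finset.sum_add_distrib.symm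
      _ ≤ wsum (fun i => f i + g i) := sum_le_wsum _ _

theorem wsum_equiv {J : Type*} (e : I ≃ J) (f : J → U) :
    wsum (fun i => f (e i)) = wsum f := by
  refine le_antisymm (wsum_le fun K => ?_) (wsum_le fun K => ?_)
  · calc ∑ i ∈ K, f (e i) = ∑ j ∈ K.map e.toEmbedding, f j := by
          rw [Finset.sum_map]; simp
      _ ≤ _ := sum_le_wsum f _
  · calc ∑ j ∈ K, f j = ∑ i ∈ K.map e.symm.toEmbedding, f (e i) := by
          rw [Finset.sum_map]
          exact Finset.sum_congr rfl fun j _ => by simp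
      _ ≤ _ := sum_le_wsum _ _

end Wsum

section Fubini

variable {I : Type*} {J : Type*}

theorem finsetSum_wsum_le {F : I → J → U} {z : U} (Jf : Finset I) (c : U)
    (h : ∀ L : Finset (I × J), (∀ p ∈ L, p.1 ∈ Jf) → c + ∑ p ∈ L, F p.1 p.2 ≤ z) :
    c + ∑ i ∈ Jf, wsum (F i) ≤ z := by
  induction Jf using Finset.induction generalizing c with
  | empty => simpa using h ∅ (by simp)
  | @insert a Jf ha ih =>
    rw [Finset.sum_insert ha, ← add_assoc]
    refine ih (c + wsum (F a)) (fun L hL => ?_)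
    rw [add_right_comm]
    refine add_wsum_le fun K => ?_
    rw [add_right_comm, add_assoc]
    have hemb : Function.Injective (fun j : J => (a, j)) := fun x y e => by
      simpa using congrArg Prod.snd e
    have hdisj : Disjoint (K.map ⟨fun j => (a, j), hemb⟩) L := by
      rw [Finset.disjoint_left]
      intro p hp' hp
      obtain ⟨j, _, rfl⟩ := Finset.mem_map.1 hp'
      exact ha (hL _ hp)
    have hsum : ∑ j ∈ K, F a j + ∑ p ∈ L, F p.1 p.2
        = ∑ p ∈ K.map ⟨fun j => (a, j), hemb⟩ ∪ L, F p.1 p.2 := by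
      rw [Finset.sum_union hdisj, Finset.sum_map]
      rfl
    rw [hsum]
    refine h _ ?_
    intro p hp
    rcases Finset.mem_union.1 hp with hp | hp
    · obtain ⟨j, _, rfl⟩ := Finset.mem_map.1 hp
      exact Finset.mem_insert_self _ _
    · exact Finset.mem_insert_of_mem (hL _ hp)

theorem wsum_prod (F : I → J → U) :
    wsum (fun p : I × J => F p.1 p.2) = wsum (fun i => wsum (F i)) := by
  refine le_antisymm (wsum_le fun L => ?_) (wsum_le fun Jf => ?_)
  · have h1 : ∑ p ∈ L, F p.1 p.2
        = ∑ i ∈ L.image Prod.fst, ∑ p ∈ L.filter (fun p => p.1 = i), F p.1 p.2 :=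
      (Finset.sum_fiberwise_of_maps_to
        (fun p hp => Finset.mem_image_of_mem _ hp) _).symm
    have h3 : ∀ i ∈ L.image Prod.fst,
        ∑ p ∈ L.filter (fun p => p.1 = i), F p.1 p.2 ≤ wsum (F i) := by
      intro i _
      have h2 : ∑ p ∈ L.filter (fun p => p.1 = i), F p.1 p.2
          = ∑ j ∈ (L.filter (fun p => p.1 = i)).image Prod.snd, F i j := by
        rw [Finset.sum_image (fun p hp q hq e => ?_)]
        · exact Finset.sum_congr rfl fun p hp => by
            rw [(Finset.mem_filter.1 hp).2]
        · exact Prod.ext (((Finset.mem_filter.1 hp).2).trans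
            ((Finset.mem_filter.1 hq).2).symm) e
      rw [h2]
      exact sum_le_wsum _ _
    calc ∑ p ∈ L, F p.1 p.2
        = ∑ i ∈ L.image Prod.fst, ∑ p ∈ L.filter (fun p => p.1 = i), F p.1 p.2 := h1
      _ ≤ ∑ i ∈ L.image Prod.fst, wsum (F i) := Finset.sum_le_sum h3
      _ ≤ wsum (fun i => wsum (F i)) := sum_le_wsum _ _
  · have := finsetSum_wsum_le (F := F) (z := wsum (fun p : I × J => F p.1 p.2)) Jf 0
      (fun L _ => by simpa using sum_le_wsum (fun p : I × J => F p.1 p.2) L)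
    simpa using this

theorem wsum_swap (F : I → J → U) :
    wsum (fun i => wsum (fun j => F i j)) = wsum (fun j => wsum (fun i => F i j)) := by
  rw [← wsum_prod]
  rw [← wsum_prod (fun j i => F i j)]
  have h := wsum_equiv (Equiv.prodComm I J) (fun q : J × I => F q.2 q.1)
  simp only [Equiv.prodComm_apply, Prod.snd_swap, Prod.fst_swap] at h
  exact h

end Fubini

section Chains

variable {I : Type v}

theorem directedOn_range_mono {x : ℕ → U} (hx : Monotone x) :
    DirectedOn (· ≤ ·) (Set.range x) := by
  rintro _ ⟨n, rfl⟩ _ ⟨m, rfl⟩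
  exact ⟨x (max n m), ⟨_, rfl⟩, hx (le_max_left _ _), hx (le_max_right _ _)⟩

theorem iSup_add_iSup {x y : ℕ → U} (hx : Monotone x) (hy : Monotone y) :
    ((⨆ n, x n) + ⨆ n, y n) = ⨆ n, (x n + y n) := by
  refine le_antisymm ?_ (iSup_le fun n => add_le_add (le_iSup x n) (le_iSup y n))
  rw [show (⨆ n, x n) = sSup (Set.range x) from rfl,
    ← OLSemiring.add_scott _ (Set.range_nonempty x) (directedOn_range_mono hx) _]
  refine sSup_le ?_
  rintro _ ⟨_, ⟨n, rfl⟩, rfl⟩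
  show x n + (⨆ n, y n) ≤ _
  rw [add_comm, show (⨆ n, y n) = sSup (Set.range y) from rfl,
    ← OLSemiring.add_scott _ (Set.range_nonempty y) (directedOn_range_mono hy) _]
  refine sSup_le ?_
  rintro _ ⟨_, ⟨m, rfl⟩, rfl⟩
  show y m + x n ≤ _
  calc y m + x n ≤ y (max n m) + x (max n m) :=
        add_le_add (hy (le_max_right _ _)) (hx (le_max_left _ _))
    _ = x (max n m) + y (max n m) := add_comm _ _
    _ ≤ ⨆ k, (x k + y k) := le_iSup (fun k => x k + y k) (max n m)

theorem mul_iSup_chain (u : U) {x : ℕ → U} (hx : Monotone x) :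
    (u * ⨆ n, x n) = ⨆ n, u * x n := by
  have h := OLSemiring.mul_scott_left (Set.range x) (Set.range_nonempty x)
      (directedOn_range_mono hx) u
  have h2 : ((fun v => u * v) '' Set.range x) = Set.range fun n => u * x n := by
    rw [← Set.range_comp]; rfl
  rw [show (⨆ n, x n) = sSup (Set.range x) from rfl, ← h, h2]
  rfl

theorem finsetSum_iSup {g : ℕ → I → U} (hg : ∀ i, Monotone fun n => g n i)
    (K : Finset I) : ∑ i ∈ K, (⨆ n, g n i) = ⨆ n, ∑ i ∈ K, g n i := by
  induction K using Finset.induction with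
  | empty => simp
  | @insert a K ha ih =>
    rw [Finset.sum_insert ha, ih,
      iSup_add_iSup (hg a) (fun n m h => Finset.sum_le_sum fun i _ => hg i h)]
    exact iSup_congr fun n => (Finset.sum_insert ha).symm

theorem wsum_iSup {g : ℕ → I → U} (hg : ∀ i, Monotone fun n => g n i) :
    wsum (fun i => ⨆ n, g n i) = ⨆ n, wsum (g n) := by
  refine le_antisymm (wsum_le fun K => ?_)
    (iSup_le fun n => wsum_mono fun i => le_iSup (fun n => g n i) n)
  rw [finsetSum_iSup hg K]
  exact iSup_le fun n => (sum_le_wsum (g n) K).trans (le_iSup (fun n => wsum (g n)) n)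

theorem wsum_nat (f : ℕ → U) : wsum f = ⨆ n, ∑ k ∈ Finset.range n, f k := by
  refine le_antisymm (wsum_le fun K => ?_) (iSup_le fun n => sum_le_wsum f _)
  refine le_trans (Finset.sum_le_sum_of_subset fun k hk =>
    Finset.mem_range.2 (Nat.lt_succ_of_le (Finset.le_sup (f := id) hk)))
    (le_iSup (fun n => ∑ k ∈ Finset.range n, f k) (K.sup id + 1))

end Chains

/-! ### kext calculus -/

section Kext

variable {X Y Z : Type u}

theorem kext_eq (f : X → Y → U) (m : X → U) (y : Y) :
    kext f m y = wsum (fun x => m x * f x y) := by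
  show wsum (fun x : Function.support m => m x.1 * f x.1 y) = _
  refine wsum_subtype (p := fun x => x ∈ Function.support m)
    (f := fun x => m x * f x y) (fun x hx => ?_)
  simp only [Function.mem_support, not_not] at hx
  show m x * f x y = 0
  rw [hx, zero_mul]

theorem kext_eta (f : X → Y → U) (σ : X) : kext f (eta σ) = f σ := by
  funext y
  rw [kext_eq]
  rw [wsum_eq_single σ (fun x hx => by simp [eta, hx])]
  simp [eta]

theorem eta_kext (m : X → U) : kext eta m = m := by
  funext y
  rw [kext_eq]
  rw [wsum_eq_single y (fun x hx => by simp [eta, Ne.symm hx])]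
  simp [eta]

theorem kext_assoc (g : Y → Z → U) (f : X → Y → U) (m : X → U) :
    kext g (kext f m) = kext (fun x => kext g (f x)) m := by
  funext z
  rw [kext_eq]
  calc wsum (fun y => kext f m y * g y z)
      = wsum (fun y => wsum (fun x => m x * f x y * g y z)) :=
        wsum_congr fun y => by rw [kext_eq, wsum_mul]
    _ = wsum (fun x => wsum (fun y => m x * f x y * g y z)) := (wsum_swap _).symm
    _ = wsum (fun x => m x * kext g (f x) z) := wsum_congr fun x => by
        rw [kext_eq g (f x), mul_wsum]
        exact wsum_congr fun y => mul_assoc _ _ _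
    _ = kext (fun x => kext g (f x)) m z := (kext_eq _ _ _).symm

theorem kext_add (f : X → Y → U) (m₁ m₂ : X → U) :
    kext f (fun x => m₁ x + m₂ x) = fun y => kext f m₁ y + kext f m₂ y := by
  funext y
  rw [kext_eq, kext_eq, kext_eq, ← wsum_add]
  exact wsum_congr fun x => add_mul _ _ _

theorem kext_fun_add (f g : X → Y → U) (m : X → U) :
    kext (fun x y => f x y + g x y) m = fun y => kext f m y + kext g m y := by
  funext y
  rw [kext_eq, kext_eq, kext_eq, ← wsum_add]
  exact wsum_congr fun x => mul_add _ _ _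

theorem kext_smul (u : U) (f : X → Y → U) (m : X → U) :
    kext f (fun x => u * m x) = fun y => u * kext f m y := by
  funext y
  rw [kext_eq, kext_eq, mul_wsum]
  exact wsum_congr fun x => mul_assoc _ _ _

theorem kext_wsum_family {T : Type*} (f : X → Y → U) (ms : T → X → U) :
    kext f (fun x => wsum (fun t => ms t x)) = fun y => wsum (fun t => kext f (ms t) y) := by
  funext y
  rw [kext_eq]
  calc wsum (fun x => wsum (fun t => ms t x) * f x y)
      = wsum (fun x => wsum (fun t => ms t x * f x y)) :=
        wsum_congr fun x => wsum_mul _ _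
    _ = wsum (fun t => wsum (fun x => ms t x * f x y)) := wsum_swap _
    _ = wsum (fun t => kext f (ms t) y) := wsum_congr fun t => (kext_eq _ _ _).symm

theorem kext_mono {f g : X → Y → U} (h : ∀ x y, f x y ≤ g x y) (m : X → U) (y : Y) :
    kext f m y ≤ kext g m y := by
  rw [kext_eq, kext_eq]
  exact wsum_mono fun x => mul_le_mul' le_rfl (h x y)

theorem kext_iSup {F : ℕ → X → Y → U} (hF : Monotone F) (m : X → U) (y : Y) :
    kext (⨆ n, F n) m y = ⨆ n, kext (F n) m y := by
  rw [kext_eq]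
  calc wsum (fun x => m x * (⨆ n, F n) x y)
      = wsum (fun x => ⨆ n, m x * F n x y) := by
        refine wsum_congr fun x => ?_
        have h1 : (⨆ n, F n) x y = ⨆ n, F n x y := by simp only [iSup_apply]
        rw [h1, mul_iSup_chain (m x) (fun a b hab => hF hab x y)]
    _ = ⨆ n, wsum (fun x => m x * F n x y) :=
        wsum_iSup (fun x a b hab => mul_le_mul' le_rfl (hF hab x y))
    _ = ⨆ n, kext (F n) m y := iSup_congr fun n => (kext_eq _ _ _).symm

theorem kext_ne_zero {f : X → Y → U} {m : X → U} {y : Y}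
    (h : kext f m y ≠ 0) : ∃ x, m x ≠ 0 ∧ f x y ≠ 0 := by
  by_contra hc
  push_neg at hc
  refine h ?_
  rw [kext_eq]
  refine wsum_eq_zero fun x => ?_
  by_cases hx : m x = 0
  · rw [hx, zero_mul]
  · rw [hc x hx, mul_zero]

end Kext

/-! ### Semantics lemmas -/

section Sem

variable {St TI Act : Type u} (tsem : TI → Set St) (asem : Act → St → St → U)

theorem kext_sem_assume_apply (e : Expr U TI) (m : St → U) (τ : St) :
    kext (sem tsem asem (.assume e)) m τ = m τ * eeval tsem e τ := by
  rw [show sem tsem asem (.assume e) = fun σ τ => eeval tsem e σ * eta σ τ from rfl]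
  rw [kext_eq]
  rw [wsum_eq_single τ (fun x hx => by simp [eta, Ne.symm hx])]
  simp [eta, mul_assoc]

theorem kext_sem_assume (e : Expr U TI) (m : St → U) :
    kext (sem tsem asem (.assume e)) m = fun τ => m τ * eeval tsem e τ :=
  funext fun τ => kext_sem_assume_apply tsem asem e m τ

theorem kext_sem_seq (C₁ C₂ : Prog U St TI Act) (m : St → U) :
    kext (sem tsem asem (.seq C₁ C₂)) m
      = kext (sem tsem asem C₂) (kext (sem tsem asem C₁) m) := by
  rw [kext_assoc]
  rfl

theorem Phi_mono (w w' : St → U) (g : St → St → U) {f f' : St → St → U}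
    (h : f ≤ f') : Phi w w' g f ≤ Phi (U := U) w w' g f' := by
  intro σ τ
  exact add_le_add (mul_le_mul' le_rfl (kext_mono (fun a b => h a b) _ _)) le_rfl

theorem chain_mono (w w' : St → U) (g : St → St → U) :
    Monotone (fun n => (Phi w w' g)^[n] (fun _ _ => (0 : U))) := by
  refine monotone_nat_of_le_succ fun n => ?_
  induction n with
  | zero => intro σ τ; exact zero_le
  | succ n ih =>
    rw [Function.iterate_succ_apply', Function.iterate_succ_apply']
    exact Phi_mono w w' g ih

theorem kext_Phi (w w' : St → U) (g f : St → St → U) (m : St → U) :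
    kext (Phi w w' g f) m
      = fun τ => kext f (kext g (fun σ => m σ * w σ)) τ + m τ * w' τ := by
  funext τ
  rw [show Phi w w' g f = fun σ τ => w σ * kext f (g σ) τ + w' σ * eta σ τ from rfl]
  rw [kext_eq]
  calc wsum (fun x => m x * (w x * kext f (g x) τ + w' x * eta x τ))
      = wsum (fun x => (m x * w x) * kext f (g x) τ + m x * (w' x * eta x τ)) :=
        wsum_congr fun x => by rw [mul_add, mul_assoc]
    _ = wsum (fun x => (m x * w x) * kext f (g x) τ)
        + wsum (fun x => m x * (w' x * eta x τ)) := wsum_add _ _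
    _ = kext f (kext g (fun σ => m σ * w σ)) τ + m τ * w' τ := by
        congr 1
        · calc wsum (fun x => (m x * w x) * kext f (g x) τ)
              = kext (fun x => kext f (g x)) (fun σ => m σ * w σ) τ :=
                (kext_eq _ _ _).symm
            _ = kext f (kext g (fun σ => m σ * w σ)) τ := by rw [kext_assoc]
        · rw [wsum_eq_single τ (fun x hx => by simp [eta, Ne.symm hx])]
          simp [eta, mul_assoc]

/-- The trajectory of weighting functions along an iteration. -/
noncomputable def traj (e : Expr U TI) (C : Prog U St TI Act) (m : St → U) :
    ℕ → St → U
  | 0 => m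
  | n + 1 => kext (sem tsem asem (.seq (.assume e) C)) (traj e C m n)

theorem traj_shift (e : Expr U TI) (C : Prog U St TI Act) (m : St → U) (k : ℕ) :
    traj tsem asem e C (traj tsem asem e C m 1) k = traj tsem asem e C m (k + 1) := by
  induction k with
  | zero => rfl
  | succ k ih => show kext _ _ = kext _ _; rw [ih]

theorem kext_iterPhi (e e' : Expr U TI) (C : Prog U St TI Act) (n : ℕ) :
    ∀ m : St → U,
      kext ((Phi (eeval tsem e) (eeval tsem e') (sem tsem asem C))^[n]
          (fun _ _ => 0)) m
        = fun τ => ∑ k ∈ Finset.range n,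
            traj tsem asem e C m k τ * eeval tsem e' τ := by
  induction n with
  | zero =>
    intro m
    funext τ
    rw [Finset.range_zero, Finset.sum_empty, Function.iterate_zero_apply, kext_eq]
    exact wsum_eq_zero fun x => mul_zero _
  | succ n ih =>
    intro m
    rw [Function.iterate_succ_apply', kext_Phi]
    have hstep : kext (sem tsem asem C) (fun σ => m σ * eeval tsem e σ)
        = traj tsem asem e C m 1 := by
      show _ = kext (sem tsem asem (.seq (.assume e) C)) m
      rw [kext_sem_seq, kext_sem_assume]
    rw [hstep, ih (traj tsem asem e C m 1)]
    funext τ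
    rw [Finset.sum_range_succ']
    congr 1
    exact Finset.sum_congr rfl fun k _ => by rw [traj_shift]

theorem kext_sem_iter (e e' : Expr U TI) (C : Prog U St TI Act) (m : St → U) :
    kext (sem tsem asem (.iter C e e')) m
      = fun τ => wsum (fun n => traj tsem asem e C m n τ * eeval tsem e' τ) := by
  funext τ
  rw [show sem tsem asem (.iter C e e')
      = ⨆ n, (Phi (eeval tsem e) (eeval tsem e') (sem tsem asem C))^[n]
          (fun _ _ => 0) from rfl]
  rw [kext_iSup (chain_mono _ _ _) m τ]
  calc (⨆ n, kext ((Phi (eeval tsem e) (eeval tsem e') (sem tsem asem C))^[n]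
          (fun _ _ => 0)) m τ)
      = ⨆ n, ∑ k ∈ Finset.range n, traj tsem asem e C m k τ * eeval tsem e' τ :=
        iSup_congr fun n => by rw [kext_iterPhi]
    _ = wsum (fun k => traj tsem asem e C m k τ * eeval tsem e' τ) :=
        (wsum_nat _).symm

end Sem

/-! ### Support lemmas and soundness -/

section Support

theorem eta_ne_zero {X : Type u} {σ τ : X} (h : eta (U := U) σ τ ≠ 0) : τ = σ := by
  by_contra hne
  exact h (by simp [eta, hne])

theorem iSup_ne_zero {x : ℕ → U} (h : (⨆ n, x n) ≠ 0) : ∃ n, x n ≠ 0 := by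
  by_contra hc
  push_neg at hc
  refine h (le_antisymm (iSup_le fun n => le_of_eq (hc n)) zero_le)

theorem not_freeVars {Var : Type} {P : Set (Store Var)} {x : Var}
    (h : x ∉ freeVars P) : ∀ s ∈ P, ∀ v : ℤ, Function.update s x v ∈ P := by
  intro s hs v
  by_contra hc
  exact h ⟨s, hs, v, hc⟩

theorem sem_support {U' : Type} [OLSemiring U'] {Var : Type} (C : ProgS U' Var)
    (P : Set (Store Var)) (hfree : ∀ x ∈ modVars C, x ∉ freeVars P) :
    ∀ σ ∈ P, ∀ τ, sem id (asemAssign U') C σ τ ≠ 0 → τ ∈ P := by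
  induction C with
  | skip =>
    intro σ hσ τ h
    exact (eta_ne_zero h) ▸ hσ
  | seq C₁ C₂ ih₁ ih₂ =>
    intro σ hσ τ h
    have h' : kext (sem id (asemAssign U') C₂) (sem id (asemAssign U') C₁ σ) τ ≠ 0 := h
    obtain ⟨ρ, hρ1, hρ2⟩ := kext_ne_zero h'
    exact ih₂ (fun x hx => hfree x (Set.mem_union_right _ hx)) ρ
      (ih₁ (fun x hx => hfree x (Set.mem_union_left _ hx)) σ hσ ρ hρ1) τ hρ2
  | choice C₁ C₂ ih₁ ih₂ =>
    intro σ hσ τ h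
    have h' : sem id (asemAssign U') C₁ σ τ + sem id (asemAssign U') C₂ σ τ ≠ 0 := h
    by_cases h1 : sem id (asemAssign U') C₁ σ τ = 0
    · have h2 : sem id (asemAssign U') C₂ σ τ ≠ 0 := fun h2 => h' (by rw [h1, h2, add_zero])
      exact ih₂ (fun x hx => hfree x (Set.mem_union_right _ hx)) σ hσ τ h2
    · exact ih₁ (fun x hx => hfree x (Set.mem_union_left _ hx)) σ hσ τ h1
  | assume e =>
    intro σ hσ τ h
    have h' : eeval id e σ * eta σ τ ≠ 0 := h
    have he : eta (U := U') σ τ ≠ 0 := fun hz => h' (by rw [hz, mul_zero])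
    exact (eta_ne_zero he) ▸ hσ
  | iter C e e' ihC =>
    intro σ hσ τ h
    have h' : (⨆ n, (Phi (eeval id e) (eeval id e') (sem id (asemAssign U') C))^[n]
        (fun _ _ => 0)) σ τ ≠ 0 := h
    have h'' : (⨆ n, (Phi (eeval id e) (eeval id e') (sem id (asemAssign U') C))^[n]
        (fun _ _ => 0) σ τ) ≠ 0 := by
      simpa only [iSup_apply] using h'
    obtain ⟨n, hn⟩ := iSup_ne_zero h''
    have key : ∀ n, ∀ σ ∈ P, ∀ τ,
        (Phi (eeval id e) (eeval id e') (sem id (asemAssign U') C))^[n]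
          (fun _ _ => 0) σ τ ≠ 0 → τ ∈ P := by
      intro n
      induction n with
      | zero => intro σ hσ τ h0; exact absurd rfl h0
      | succ n ih =>
        intro σ hσ τ h0
        rw [Function.iterate_succ_apply'] at h0
        have hPhi : (Phi (eeval id e) (eeval id e') (sem id (asemAssign U') C))
            ((Phi (eeval id e) (eeval id e') (sem id (asemAssign U') C))^[n]
              (fun _ _ => 0)) σ τ
            = eeval id e σ * kext ((Phi (eeval id e) (eeval id e')
                (sem id (asemAssign U') C))^[n] (fun _ _ => 0))
                (sem id (asemAssign U') C σ) τ
              + eeval id e' σ * eta σ τ := rfl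
        rw [hPhi] at h0
        by_cases h1 : eeval id e σ * kext ((Phi (eeval id e) (eeval id e')
            (sem id (asemAssign U') C))^[n] (fun _ _ => 0))
            (sem id (asemAssign U') C σ) τ = 0
        · have h2 : eeval id e' σ * eta σ τ ≠ 0 := fun h2 => h0 (by rw [h1, h2, add_zero])
          have he : eta (U := U') σ τ ≠ 0 := fun hz => h2 (by rw [hz, mul_zero])
          exact (eta_ne_zero he) ▸ hσ
        · have hk : kext ((Phi (eeval id e) (eeval id e')
              (sem id (asemAssign U') C))^[n] (fun _ _ => 0))
              (sem id (asemAssign U') C σ) τ ≠ 0 :=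
            fun hz => h1 (by rw [hz, mul_zero])
          obtain ⟨ρ, hρ1, hρ2⟩ := kext_ne_zero hk
          exact ih ρ (ihC hfree σ hσ ρ hρ1) τ hρ2
    exact key n σ hσ τ hn
  | act a =>
    intro σ hσ τ h
    have h' : eta (U := U') (Function.update σ a.1 (aeval a.2 σ)) τ ≠ 0 := h
    rw [eta_ne_zero h']
    exact not_freeVars (hfree a.1 rfl) σ hσ _

end Support

section Soundness

theorem derivA_sound {U' : Type} [OLSemiring U'] {Var : Type}
    {φ ψ : OA U' (Store Var)} {C : ProgS U' Var}
    (h : DerivA φ C ψ) : valid id (asemAssign U') φ C ψ := by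
  induction h with
  | skip φ =>
    intro m hm
    have he : kext (sem id (asemAssign U') Prog.skip) m = m := eta_kext m
    rw [he]
    exact hm
  | seq h₁ h₂ ih₁ ih₂ =>
    intro m hm
    rw [kext_sem_seq]
    exact ih₂ _ (ih₁ _ hm)
  | plus h₁ h₂ ih₁ ih₂ =>
    intro m hm
    exact ⟨_, ih₁ m hm, _, ih₂ m hm, kext_fun_add _ _ m⟩
  | assume hE =>
    rename_i φ' e u
    intro m hm
    refine ⟨m, hm, ?_⟩
    rw [kext_sem_assume]
    funext τ
    by_cases hτ : m τ = 0
    · rw [hτ, zero_mul, zero_mul]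
    · rw [hE m hm τ hτ]
  | iter φn ψn ψlim hconv h1 h2 ih1 ih2 =>
    rename_i C' e e'
    intro m hm
    rw [kext_sem_iter]
    have htraj : ∀ n, traj id (asemAssign U') e C' m n ∈ φn n := by
      intro n
      induction n with
      | zero => exact hm
      | succ n ih => exact ih1 n _ ih
    have hfin := hconv
      (fun n => kext (sem id (asemAssign U') (.assume e'))
        (traj id (asemAssign U') e C' m n))
      (fun n => ih2 n _ (htraj n))
    simp only [kext_sem_assume_apply] at hfin
    exact hfin
  | false C' φ' => intro m hm; cases hm
  | true C' φ' => intro m hm; trivial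
  | scale u hC ih =>
    rintro m' ⟨m, hm, rfl⟩
    exact ⟨_, ih m hm, kext_smul u _ m⟩
  | disj h₁ h₂ ih₁ ih₂ =>
    rintro m (hm | hm)
    · exact Or.inl (ih₁ m hm)
    · exact Or.inr (ih₂ m hm)
  | conj h₁ h₂ ih₁ ih₂ =>
    intro m hm
    exact ⟨ih₁ m hm.1, ih₂ m hm.2⟩
  | choice φt φt' hd ih =>
    rintro m ⟨f, hf, rfl⟩
    exact ⟨fun t => kext _ (f t), fun t => ih t _ (hf t), kext_wsum_family _ f⟩
  | exists_ φt φt' hd ih =>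
    intro m hm
    obtain ⟨t, ht⟩ := Set.mem_iUnion.1 hm
    exact Set.mem_iUnion.2 ⟨t, ih t m ht⟩
  | conseq hsub1 hD hsub2 ih =>
    intro m hm
    exact hsub2 (ih m (hsub1 hm))
  | assign x E φ' =>
    intro m hm
    exact hm
  | constancy P hD hfree ih =>
    rintro m ⟨hφ, hbox⟩
    refine ⟨ih m hφ, ?_⟩
    intro τ hτ
    obtain ⟨x, hx1, hx2⟩ := kext_ne_zero hτ
    exact sem_support _ P
      (fun y hy hf => (Set.eq_empty_iff_forall_notMem.1 hfree y) ⟨hf, hy⟩)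
      x (hbox hx1) τ hx2
end Soundness

/-! ### Completeness -/

section Completeness

variable {U' : Type} [OLSemiring U'] {Var : Type}

theorem derivA_assume_single (e : Expr U' (Set (Store Var))) (m : Store Var → U') :
    DerivA {m} (.assume e) {kext (sem id (asemAssign U') (.assume e)) m} := by
  have hder : ∀ σ : Store Var,
      DerivA {fun τ => m σ * eta σ τ} (.assume e)
        (odotR {fun τ => m σ * eta σ τ} (eeval id e σ)) := by
    intro σ
    refine DerivA.assume ?_
    rintro m' hm' τ hτ
    rw [Set.mem_singleton_iff] at hm'
    subst hm'
    have hτσ : τ = σ := by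
      by_contra hne
      exact hτ (by simp [eta, hne])
    rw [hτσ]
  have hch := DerivA.choice (T := Store Var)
    (fun σ => {fun τ => m σ * eta σ τ})
    (fun σ => odotR {fun τ => m σ * eta σ τ} (eeval id e σ)) hder
  refine DerivA.conseq ?_ hch ?_
  · intro m' hm'
    rw [Set.mem_singleton_iff] at hm'
    rw [hm']
    refine ⟨fun σ τ => m σ * eta σ τ, fun σ => rfl, ?_⟩
    funext τ
    rw [wsum_eq_single τ (fun σ hσ => by simp [eta, Ne.symm hσ])]
    simp [eta]
  · rintro m' ⟨f, hf, rfl⟩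
    rw [Set.mem_singleton_iff, kext_sem_assume]
    funext τ
    have hfσ : ∀ σ, f σ = fun τ => (m σ * eta σ τ) * eeval id e σ := by
      intro σ
      obtain ⟨m'', hm'', hfe⟩ := hf σ
      rw [Set.mem_singleton_iff] at hm''
      subst hm''
      exact hfe
    calc wsum (fun σ => f σ τ)
        = wsum (fun σ => (m σ * eta σ τ) * eeval id e σ) :=
          wsum_congr fun σ => by rw [hfσ σ]
      _ = m τ * eeval id e τ := by
          rw [wsum_eq_single τ (fun σ hσ => by simp [eta, Ne.symm hσ])]
          simp [eta]

theorem derivA_single (C : ProgS U' Var) : ∀ m : Store Var → U',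
    DerivA {m} C {kext (sem id (asemAssign U') C) m} := by
  induction C with
  | skip =>
    intro m
    have he : kext (sem id (asemAssign U') Prog.skip) m = m := eta_kext m
    rw [he]
    exact DerivA.skip {m}
  | seq C₁ C₂ ih₁ ih₂ =>
    intro m
    rw [kext_sem_seq]
    exact DerivA.seq (ih₁ m) (ih₂ _)
  | choice C₁ C₂ ih₁ ih₂ =>
    intro m
    refine DerivA.conseq subset_rfl (DerivA.plus (ih₁ m) (ih₂ m)) ?_
    rintro m' ⟨m₁, hm₁, m₂, hm₂, rfl⟩
    rw [Set.mem_singleton_iff] at hm₁ hm₂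
    subst hm₁; subst hm₂
    rw [Set.mem_singleton_iff]
    exact (kext_fun_add _ _ m).symm
  | assume e => exact derivA_assume_single e
  | iter C e e' ihC =>
    intro m
    have h1 : ∀ n, DerivA {traj id (asemAssign U') e C m n}
        (Prog.seq (.assume e) C) {traj id (asemAssign U') e C m (n + 1)} := by
      intro n
      have hseq := DerivA.seq (derivA_assume_single e (traj id (asemAssign U') e C m n))
        (ihC (kext (sem id (asemAssign U') (.assume e)) (traj id (asemAssign U') e C m n)))
      refine DerivA.conseq subset_rfl hseq ?_
      intro m' hm'
      rw [Set.mem_singleton_iff] at hm'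
      rw [Set.mem_singleton_iff, hm']
      show kext _ _ = kext (sem id (asemAssign U') (Prog.seq (.assume e) C)) _
      rw [kext_sem_seq]
    have h2 : ∀ n, DerivA {traj id (asemAssign U') e C m n} (Prog.assume e')
        {fun τ => traj id (asemAssign U') e C m n τ * eeval id e' τ} := by
      intro n
      refine DerivA.conseq subset_rfl
        (derivA_assume_single e' (traj id (asemAssign U') e C m n)) ?_
      intro m' hm'
      rw [Set.mem_singleton_iff] at hm'
      rw [Set.mem_singleton_iff, hm', kext_sem_assume]
    have hconv : convergesTo
        (fun n => ({fun τ => traj id (asemAssign U') e C m n τ * eeval id e' τ}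
          : OA U' (Store Var)))
        {kext (sem id (asemAssign U') (.iter C e e')) m} := by
      intro ms hms
      rw [Set.mem_singleton_iff, kext_sem_iter]
      funext τ
      refine wsum_congr fun n => ?_
      have := hms n
      rw [Set.mem_singleton_iff] at this
      rw [this]
    exact DerivA.iter (fun n => {traj id (asemAssign U') e C m n}) _ _ hconv h1 h2
  | act a =>
    intro m
    obtain ⟨x, E⟩ := a
    refine DerivA.conseq ?_
      (DerivA.assign x E {kext (sem id (asemAssign U') (.act (x, E))) m}) subset_rfl
    intro m' hm'
    rw [Set.mem_singleton_iff] at hm'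
    rw [hm']
    simp only [substOA, Set.mem_setOf_eq]
    rfl

end Completeness

/-- **Soundness and completeness of Outcome Logic with variable assignment**: in the
instance whose only atomic actions are assignments `x := E`, a triple is derivable
(with no oracle axioms) iff it is semantically valid. -/
theorem assignment_instance_sound_complete (U : Type) [OLSemiring U]
    (Var : Type) [Countable Var]
    (C : ProgS U Var) (φ ψ : OA U (Store Var)) :
    DerivA φ C ψ ↔ valid id (asemAssign U) φ C ψ := by
  constructor
  · exact derivA_sound
  · intro hval
    refine DerivA.conseq (φ := ⋃ t : φ, {t.1}) ?_
      (DerivA.exists_ (fun t : φ => {t.1})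
        (fun t : φ => {kext (sem id (asemAssign U) C) t.1})
        (fun t => derivA_single C t.1)) ?_
    · intro m hm
      exact Set.mem_iUnion.2 ⟨⟨m, hm⟩, rfl⟩
    · intro m' hm'
      obtain ⟨t, ht⟩ := Set.mem_iUnion.1 hm'
      rw [Set.mem_singleton_iff] at ht
      rw [ht]
      exact hval t.1 t.2
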